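/- Let n ≥ 2, W ∈ ℝⁿ, and let S, S′ ⊆ {1,…,n} be two proper masks (0 < |S| < n and 0 < |S′| < n). Denote by E(S) = min_{α,β∈ℝ} ‖W − α·e_S − β·(1−e_S)‖² the minimal binarization error with mask S, where e_S is the indicator vector of S. Then E(S) ≤ E(S′) if and only if D(S) ≥ D(S′). Hence minimizing the binarization error over masks is equivalent to maximizing the objective D. -/
import Mathlib


/-- For two proper masks `S`, `S′`, the minimal binarization errors
`E(S) = min_{α,β} ‖W − α·e_S − β·(1−e_S)‖²` satisfy `E(S) ≤ E(S′)` if and only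
if `D(S) ≥ D(S′)`: minimizing the error over masks is equivalent to maximizing
the objective `D`. -/
theorem dabnet_error_iff_objective (n : ℕ) (hn : 2 ≤ n) (W : Fin n → ℝ)
    (S S' : Finset (Fin n))
    (hS0 : 0 < S.card) (hSn : S.card < n)
    (hS'0 : 0 < S'.card) (hS'n : S'.card < n)
    (E : Finset (Fin n) → ℝ)
    (hE : ∀ T : Finset (Fin n),
      E T = sInf {x : ℝ | ∃ α β : ℝ,
        x = ∑ i, (W i - (if i ∈ T then α else β)) ^ 2})
    (D : Finset (Fin n) → ℝ)
    (hD : ∀ T : Finset (Fin n),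
      D T = (∑ i ∈ T, W i) ^ 2 / (T.card : ℝ)
            + (∑ i ∈ Tᶜ, W i) ^ 2 / ((n : ℝ) - (T.card : ℝ))) :
    E S ≤ E S' ↔ D S' ≤ D S := by
  have expand : ∀ (F : Finset (Fin n)) (α : ℝ), ∑ i ∈ F, (W i - α) ^ 2
      = ∑ i ∈ F, W i ^ 2 - 2 * α * (∑ i ∈ F, W i) + (F.card : ℝ) * α ^ 2 := by
    intro F α
    have h : ∀ i ∈ F, (W i - α) ^ 2 = W i ^ 2 - 2 * α * W i + α ^ 2 := by
      intro i _; ring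
    rw [Finset.sum_congr rfl h, Finset.sum_add_distrib, Finset.sum_sub_distrib,
      ← Finset.mul_sum, Finset.sum_const, nsmul_eq_mul]
  have bound : ∀ (A c α : ℝ), 0 < c → 2 * α * A - c * α ^ 2 ≤ A ^ 2 / c := by
    intro A c α hc
    rw [le_div_iff₀ hc]; nlinarith [sq_nonneg (A - c * α)]
  have key : ∀ T : Finset (Fin n), 0 < T.card → T.card < n →
      E T = ∑ i, W i ^ 2 - D T := by
    intro T h0 h1
    have hK : (0 : ℝ) < (T.card : ℝ) := by exact_mod_cast h0
    have hKc : (0 : ℝ) < (n : ℝ) - (T.card : ℝ) := by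
      have : (T.card : ℝ) < (n : ℝ) := by exact_mod_cast h1
      linarith
    have hcardc : ((Tᶜ.card : ℕ) : ℝ) = (n : ℝ) - (T.card : ℝ) := by
      rw [Finset.card_compl, Fintype.card_fin, Nat.cast_sub h1.le]
    have split : ∀ α β : ℝ, ∑ i, (W i - (if i ∈ T then α else β)) ^ 2
        = ∑ i ∈ T, (W i - α) ^ 2 + ∑ i ∈ Tᶜ, (W i - β) ^ 2 := by
      intro α β
      rw [← Finset.sum_add_sum_compl T]
      congr 1
      · exact Finset.sum_congr rfl fun i hi => by rw [if_pos hi]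
      · exact Finset.sum_congr rfl fun i hi => by rw [if_neg (Finset.mem_compl.mp hi)]
    have htot : ∑ i, W i ^ 2 = ∑ i ∈ T, W i ^ 2 + ∑ i ∈ Tᶜ, W i ^ 2 :=
      (Finset.sum_add_sum_compl T _).symm
    rw [hE]
    apply IsLeast.csInf_eq
    constructor
    · refine ⟨(∑ i ∈ T, W i) / (T.card : ℝ), (∑ i ∈ Tᶜ, W i) / ((n : ℝ) - (T.card : ℝ)), ?_⟩
      rw [split, expand, expand, hD, hcardc, htot]
      field_simp
      ring
    · rintro x ⟨α, β, rfl⟩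
      rw [split, expand, expand, hD, hcardc, htot]
      have b1 := bound (∑ i ∈ T, W i) (T.card : ℝ) α hK
      have b2 := bound (∑ i ∈ Tᶜ, W i) ((n : ℝ) - (T.card : ℝ)) β hKc
      linarith
  rw [key S hS0 hSn, key S' hS'0 hS'n]
  constructor <;> intro h <;> linarith
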